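/- Let $\rho, \sigma$ be density matrices on $\mathbb{C}^d$ and let $\mathcal{E}_\sigma(\rho) = \sum_{i} E_i \rho E_i$ be the pinching with respect to the spectral projections $E_1,\dots,E_k$ of $\sigma$ (with $k$ distinct eigenvalues). Then for any $\alpha > 1$, $D_\alpha(\rho\|\sigma) \leq D_\alpha(\mathcal{E}_\sigma(\rho)\|\sigma) + \frac{\alpha}{\alpha-1}\log k$. -/

import Mathlib

open Matrix ComplexOrder

attribute [local instance] Classical.propDecidable

/-- Real power of a Hermitian matrix taken on its support (eigenvalue `0` is sent to `0`);
junk value `0` for non-Hermitian matrices. -/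
noncomputable def mpow {d : ℕ} (A : Matrix (Fin d) (Fin d) ℂ) (r : ℝ) :
    Matrix (Fin d) (Fin d) ℂ :=
  if hA : A.IsHermitian then
    hA.eigenvectorUnitary.1 *
      Matrix.diagonal (fun i =>
        if hA.eigenvalues i = 0 then 0 else ((hA.eigenvalues i ^ r : ℝ) : ℂ)) *
      (star hA.eigenvectorUnitary : Matrix (Fin d) (Fin d) ℂ)
  else 0

/-- Sandwiched Rényi relative entropy
`D_α(ρ‖σ) = (1/(α-1)) log₂ tr (σ^{(1-α)/2α} ρ σ^{(1-α)/2α})^α` (inverses on supports). -/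
noncomputable def renyiD {d : ℕ} (α : ℝ) (ρ σ : Matrix (Fin d) (Fin d) ℂ) : ℝ :=
  (1 / (α - 1)) * Real.logb 2
    ((mpow (mpow σ ((1 - α) / (2 * α)) * ρ * mpow σ ((1 - α) / (2 * α))) α).trace.re)

lemma mpow_eq {d : ℕ} {A : Matrix (Fin d) (Fin d) ℂ} (hA : A.IsHermitian) (r : ℝ) :
    mpow A r = hA.eigenvectorUnitary.1 *
      Matrix.diagonal (fun i =>
        if hA.eigenvalues i = 0 then 0 else ((hA.eigenvalues i ^ r : ℝ) : ℂ)) *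
      (star hA.eigenvectorUnitary : Matrix (Fin d) (Fin d) ℂ) := by
  rw [mpow, dif_pos hA]

lemma mpow_isHermitian {d : ℕ} {A : Matrix (Fin d) (Fin d) ℂ} (hA : A.IsHermitian) (r : ℝ) :
    (mpow A r).IsHermitian := by
  rw [mpow_eq hA r]
  unfold Matrix.IsHermitian
  simp only [Matrix.star_eq_conjTranspose]
  rw [conjTranspose_mul, conjTranspose_mul, diagonal_conjTranspose, conjTranspose_conjTranspose]
  have : star (fun i =>
      if hA.eigenvalues i = 0 then (0:ℂ) else ((hA.eigenvalues i ^ r : ℝ) : ℂ)) =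
      (fun i => if hA.eigenvalues i = 0 then (0:ℂ) else ((hA.eigenvalues i ^ r : ℝ) : ℂ)) := by
    funext i
    by_cases h : hA.eigenvalues i = 0 <;> simp [h, Pi.star_apply]
  rw [this, mul_assoc]

lemma mpow_mul_mpow {d : ℕ} {A : Matrix (Fin d) (Fin d) ℂ} (hA : A.PosSemidef) (r s : ℝ) :
    mpow A r * mpow A s = mpow A (r + s) := by
  rw [mpow_eq hA.1 r, mpow_eq hA.1 s, mpow_eq hA.1 (r + s)]
  have hU : (star hA.1.eigenvectorUnitary : Matrix (Fin d) (Fin d) ℂ) * hA.1.eigenvectorUnitary.1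
      = 1 := Unitary.coe_star_mul_self _
  rw [show ∀ P Q Y Z W : Matrix (Fin d) (Fin d) ℂ, P * Q * Y * (Z * W * Y) = P * (Q * (Y * Z) * W) * Y
    from fun _ _ _ _ _ => by noncomm_ring, hU, mul_one, diagonal_mul_diagonal]
  congr 3
  funext i
  by_cases h : hA.1.eigenvalues i = 0
  · simp [h]
  · have hp : 0 < hA.1.eigenvalues i := lt_of_le_of_ne (hA.eigenvalues_nonneg i) (Ne.symm h)
    simp [h, Real.rpow_add hp]

lemma mpow_one' {d : ℕ} {A : Matrix (Fin d) (Fin d) ℂ} (hA : A.IsHermitian) : mpow A 1 = A := by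
  rw [mpow_eq hA 1]
  conv_rhs => rw [hA.spectral_theorem, Unitary.conjStarAlgAut_apply]
  congr 3
  funext i
  by_cases h : hA.eigenvalues i = 0 <;> simp [h]

noncomputable def Matrix.PosSemidef.sqrt {d : ℕ} {A : Matrix (Fin d) (Fin d) ℂ}
    (_hA : A.PosSemidef) : Matrix (Fin d) (Fin d) ℂ := mpow A (1 / 2)

lemma Matrix.PosSemidef.sqrt_mul_self {d : ℕ} {A : Matrix (Fin d) (Fin d) ℂ}
    (hA : A.PosSemidef) : hA.sqrt * hA.sqrt = A := by
  rw [Matrix.PosSemidef.sqrt, mpow_mul_mpow hA]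
  norm_num
  exact mpow_one' hA.1

lemma Matrix.PosSemidef.posSemidef_sqrt {d : ℕ} {A : Matrix (Fin d) (Fin d) ℂ}
    (hA : A.PosSemidef) : hA.sqrt.PosSemidef := by
  have h : hA.sqrt = (mpow A (1 / 4))ᴴ * mpow A (1 / 4) := by
    rw [(mpow_isHermitian hA.1 _).eq, mpow_mul_mpow hA, Matrix.PosSemidef.sqrt]
    norm_num
  rw [h]
  exact Matrix.posSemidef_conjTranspose_mul_self _

/-- trace of `mpow` of a PSD matrix. -/
lemma trace_mpow {d : ℕ} {A : Matrix (Fin d) (Fin d) ℂ} (hA : A.PosSemidef) {r : ℝ}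
    (hr : r ≠ 0) :
    (mpow A r).trace.re = ∑ i, (hA.1.eigenvalues i) ^ r := by
  rw [mpow_eq hA.1 r, trace_mul_comm, ← mul_assoc]
  rw [show (star hA.1.eigenvectorUnitary : Matrix (Fin d) (Fin d) ℂ) * hA.1.eigenvectorUnitary.1
      = 1 from Unitary.coe_star_mul_self _, one_mul, trace_diagonal, Complex.re_sum]
  refine Finset.sum_congr rfl fun i _ => ?_
  by_cases h : hA.1.eigenvalues i = 0
  · simp [h, Real.zero_rpow hr]
  · simp [h]

/-- a Hermitian matrix all whose eigenvalues vanish is zero -/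
lemma eq_zero_of_eigenvalues_eq_zero {d : ℕ} {A : Matrix (Fin d) (Fin d) ℂ}
    (hA : A.IsHermitian) (h : ∀ i, hA.eigenvalues i = 0) : A = 0 := by
  have := hA.spectral_theorem
  rw [show Matrix.diagonal (RCLike.ofReal ∘ hA.eigenvalues) = (0 : Matrix (Fin d) (Fin d) ℂ) by
    ext i j; by_cases hij : i = j <;> simp [Matrix.diagonal, hij, h]] at this
  simpa using this

section conjtransfer
variable {M : Type*} [Monoid M] {U V E N : M}

lemma conj_comm_transfer (h1 : V * U = 1) (h2 : U * V = 1)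
    (hc : (V * E * U) * N = N * (V * E * U)) : E * (U * N * V) = (U * N * V) * E := by
  have c1 : ∀ X : M, V * (U * X) = X := fun X => by rw [← mul_assoc, h1, one_mul]
  have c2 : ∀ X : M, U * (V * X) = X := fun X => by rw [← mul_assoc, h2, one_mul]
  have hc' : V * (E * (U * N)) = N * (V * (E * U)) := by
    simpa only [mul_assoc] using hc
  calc E * (U * N * V) = U * (V * (E * (U * N))) * V := by simp only [mul_assoc, c2]
    _ = U * (N * (V * (E * U))) * V := by rw [hc']
    _ = (U * N * V) * E := by simp only [mul_assoc, h2, mul_one, c1, c2]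

lemma conj_comm_transfer' (h1 : V * U = 1) (h2 : U * V = 1)
    (hc : E * (U * N * V) = (U * N * V) * E) : (V * E * U) * N = N * (V * E * U) := by
  have c1 : ∀ X : M, V * (U * X) = X := fun X => by rw [← mul_assoc, h1, one_mul]
  have hc' : E * (U * (N * V)) = U * (N * (V * E)) := by
    simpa only [mul_assoc] using hc
  calc (V * E * U) * N = V * (E * (U * N * V)) * U := by simp only [mul_assoc, h1, mul_one]
    _ = V * ((U * N * V) * E) * U := by rw [hc]
    _ = N * (V * E * U) := by simp only [mul_assoc, c1]
end conjtransfer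

section commute
variable {d : ℕ}

lemma commute_diagonal_map {M : Matrix (Fin d) (Fin d) ℂ} {f : Fin d → ℂ} (g : ℂ → ℂ)
    (h : M * diagonal f = diagonal f * M) :
    M * diagonal (fun i => g (f i)) = diagonal (fun i => g (f i)) * M := by
  ext i j
  have h' : M i j * f j = f i * M i j := by
    have := congrFun (congrFun h i) j
    simpa [Matrix.mul_diagonal, Matrix.diagonal_mul] using this
  simp only [Matrix.mul_diagonal, Matrix.diagonal_mul]
  by_cases hf : f i = f j
  · rw [hf]; ring
  · have : M i j = 0 := by
      rcases mul_eq_zero.mp (show M i j * (f j - f i) = 0 by rw [mul_sub, h']; ring) with h0 | h0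
      · exact h0
      · exact absurd (sub_eq_zero.mp h0).symm hf
    simp [this]

lemma commute_mpow {σ E : Matrix (Fin d) (Fin d) ℂ} (hσ : σ.IsHermitian)
    (h : E * σ = σ * E) (r : ℝ) : E * mpow σ r = mpow σ r * E := by
  have hU1 : (star hσ.eigenvectorUnitary : Matrix (Fin d) (Fin d) ℂ) * hσ.eigenvectorUnitary.1
      = 1 := Unitary.coe_star_mul_self _
  have hU2 : hσ.eigenvectorUnitary.1 * (star hσ.eigenvectorUnitary : Matrix (Fin d) (Fin d) ℂ)
      = 1 := Unitary.coe_mul_star_self _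
  have hspec := hσ.spectral_theorem
  rw [hspec] at h
  have hcDf := conj_comm_transfer' hU1 hU2 h
  have hcDg := commute_diagonal_map (fun z : ℂ => if z = 0 then 0 else ((z.re ^ r : ℝ) : ℂ)) hcDf
  have hgf : (fun i => (fun z : ℂ => if z = 0 then (0:ℂ) else ((z.re ^ r : ℝ) : ℂ))
        ((RCLike.ofReal ∘ hσ.eigenvalues) i)) =
      (fun i => if hσ.eigenvalues i = 0 then (0:ℂ) else ((hσ.eigenvalues i ^ r : ℝ) : ℂ)) := by
    funext i
    by_cases hz : hσ.eigenvalues i = 0 <;>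
      simp [hz, Complex.ofReal_eq_zero]
  rw [hgf] at hcDg
  rw [mpow_eq hσ r]
  exact conj_comm_transfer hU1 hU2 hcDg
end commute

section psd
variable {d : ℕ}

lemma posSemidef_smul_real {M : Matrix (Fin d) (Fin d) ℂ} (hM : M.PosSemidef) {r : ℝ}
    (hr : 0 ≤ r) : ((r : ℂ) • M).PosSemidef := by
  refine Matrix.PosSemidef.of_dotProduct_mulVec_nonneg ?_ ?_
  · unfold Matrix.IsHermitian
    rw [Matrix.conjTranspose_smul, hM.1.eq]
    congr 1
    simp [Complex.ext_iff]
  · intro x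
    rw [Matrix.smul_mulVec, dotProduct_smul]
    exact mul_nonneg (by exact_mod_cast hr) (hM.dotProduct_mulVec_nonneg x)

lemma posSemidef_sum {k : ℕ} (f : Fin k → Matrix (Fin d) (Fin d) ℂ)
    (hf : ∀ i, (f i).PosSemidef) : (∑ i, f i).PosSemidef :=
  Finset.sum_induction f _ (fun _ _ ha hb => ha.add hb) Matrix.PosSemidef.zero
    (fun i _ => hf i)

/-- the pinching inequality `ρ ≤ k • E(ρ)` -/
lemma pinching_ineq {k : ℕ} (ρ : Matrix (Fin d) (Fin d) ℂ) (hρ : ρ.PosSemidef)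
    (E : Fin k → Matrix (Fin d) (Fin d) ℂ) (hherm : ∀ i, (E i).IsHermitian)
    (hsum : ∑ i, E i = 1) :
    ((k : ℂ) • (∑ i, E i * ρ * E i) - ρ).PosSemidef := by
  classical
  have hRR : hρ.sqrt * hρ.sqrt = ρ := hρ.sqrt_mul_self
  have hRh : hρ.sqrt.IsHermitian := hρ.posSemidef_sqrt.1
  set R := hρ.sqrt
  set A : Fin k → Matrix (Fin d) (Fin d) ℂ := fun i => R * E i with hA
  have hS : ∑ i, A i = R := by
    rw [hA, ← Finset.mul_sum, hsum, mul_one]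
  have hT : ∑ i, (A i)ᴴ * A i = ∑ i, E i * ρ * E i := by
    refine Finset.sum_congr rfl fun i _ => ?_
    rw [hA]
    simp only [Matrix.conjTranspose_mul, hRh.eq, (hherm _).eq]
    rw [← hRR]; noncomm_ring
  have expand : ∀ i j : Fin k, (A i - A j)ᴴ * (A i - A j)
      = (A i)ᴴ * A i - (A i)ᴴ * A j - (A j)ᴴ * A i + (A j)ᴴ * A j := by
    intro i j
    rw [Matrix.conjTranspose_sub]
    noncomm_ring
  have key : ∑ i, ∑ j, (A i - A j)ᴴ * (A i - A j)
      = (2 : ℂ) • ((k : ℂ) • (∑ i, E i * ρ * E i) - ρ) := by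
    have inner : ∀ i, (∑ j, (A i - A j)ᴴ * (A i - A j))
        = k • ((A i)ᴴ * A i) - (A i)ᴴ * R - Rᴴ * A i + ∑ j, (A j)ᴴ * A j := by
      intro i
      calc ∑ j, (A i - A j)ᴴ * (A i - A j)
          = ∑ j, ((A i)ᴴ * A i - (A i)ᴴ * A j - (A j)ᴴ * A i + (A j)ᴴ * A j) :=
            Finset.sum_congr rfl fun j _ => expand i j
        _ = k • ((A i)ᴴ * A i) - (A i)ᴴ * (∑ j, A j) - (∑ j, (A j)ᴴ) * A i
              + ∑ j, (A j)ᴴ * A j := by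
            rw [Finset.sum_add_distrib, Finset.sum_sub_distrib, Finset.sum_sub_distrib,
              Finset.sum_const, Finset.card_univ, Fintype.card_fin,
              ← Finset.mul_sum, ← Finset.sum_mul]
        _ = _ := by rw [hS, ← Matrix.conjTranspose_sum, hS]
    calc ∑ i, ∑ j, (A i - A j)ᴴ * (A i - A j)
        = ∑ i, (k • ((A i)ᴴ * A i) - (A i)ᴴ * R - Rᴴ * A i + ∑ j, (A j)ᴴ * A j) :=
          Finset.sum_congr rfl fun i _ => inner i
      _ = k • (∑ i, (A i)ᴴ * A i) - (∑ i, (A i)ᴴ) * R - Rᴴ * (∑ i, A i)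
            + k • ∑ j, (A j)ᴴ * A j := by
          rw [Finset.sum_add_distrib, Finset.sum_sub_distrib, Finset.sum_sub_distrib,
            Finset.sum_const, Finset.card_univ, Fintype.card_fin,
            ← Finset.smul_sum, ← Finset.mul_sum, ← Finset.sum_mul]
      _ = k • (∑ i, E i * ρ * E i) - ρ - ρ + k • ∑ i, E i * ρ * E i := by
          rw [hT, ← Matrix.conjTranspose_sum, hS, hRh.eq, hRR]
      _ = (2 : ℂ) • ((k : ℂ) • (∑ i, E i * ρ * E i) - ρ) := by
          rw [← Nat.cast_smul_eq_nsmul ℂ]; module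
  have hQ : (∑ i, ∑ j, (A i - A j)ᴴ * (A i - A j)).PosSemidef :=
    posSemidef_sum _ fun i => posSemidef_sum _ fun j =>
      Matrix.posSemidef_conjTranspose_mul_self _
  have := posSemidef_smul_real hQ (r := 1/2) (by norm_num)
  rw [key, smul_smul] at this
  convert this using 1
  norm_num

end psd

section eig
variable {d : ℕ}

lemma coeff_eq {A : Matrix (Fin d) (Fin d) ℂ} (hA : A.IsHermitian)
    (x : EuclideanSpace ℂ (Fin d)) (j : Fin d) :
    ((star hA.eigenvectorUnitary : Matrix (Fin d) (Fin d) ℂ) *ᵥ (x : Fin d → ℂ)) j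
      = @inner ℂ _ _ (hA.eigenvectorBasis j) x := by
  simp [Matrix.mulVec, dotProduct, PiLp.inner_apply, Matrix.star_apply,
    RCLike.inner_apply, mul_comm]

lemma dot_eq_diag {A : Matrix (Fin d) (Fin d) ℂ} (hA : A.IsHermitian) (x : Fin d → ℂ) :
    dotProduct (star x) (A *ᵥ x)
      = dotProduct
          (star ((star hA.eigenvectorUnitary : Matrix (Fin d) (Fin d) ℂ) *ᵥ x))
          (Matrix.diagonal (RCLike.ofReal ∘ hA.eigenvalues) *ᵥ
            ((star hA.eigenvectorUnitary : Matrix (Fin d) (Fin d) ℂ) *ᵥ x)) := by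
  have hyst : star ((star hA.eigenvectorUnitary : Matrix (Fin d) (Fin d) ℂ) *ᵥ x)
      = Matrix.vecMul (star x) hA.eigenvectorUnitary.1 := by
    rw [Matrix.star_mulVec, Matrix.star_eq_conjTranspose, Matrix.conjTranspose_conjTranspose]
  calc dotProduct (star x) (A *ᵥ x)
      = dotProduct (star x) (hA.eigenvectorUnitary.1 *ᵥ
          (Matrix.diagonal (RCLike.ofReal ∘ hA.eigenvalues) *ᵥ
            ((star hA.eigenvectorUnitary : Matrix (Fin d) (Fin d) ℂ) *ᵥ x))) := by
        conv_lhs => rw [hA.spectral_theorem, Unitary.conjStarAlgAut_apply]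
        rw [Matrix.mulVec_mulVec, Matrix.mulVec_mulVec]
    _ = _ := by
        rw [dotProduct_mulVec, hyst]

lemma ofReal_comp_eig {A : Matrix (Fin d) (Fin d) ℂ} (hA : A.IsHermitian) :
    (RCLike.ofReal ∘ hA.eigenvalues : Fin d → ℂ)
      = fun j => ((hA.eigenvalues j : ℝ) : ℂ) := rfl

lemma quad_repr {A : Matrix (Fin d) (Fin d) ℂ} (hA : A.IsHermitian) (x : Fin d → ℂ) :
    (dotProduct (star x) (A *ᵥ x)).re
      = ∑ j, hA.eigenvalues j *
          Complex.normSq (((star hA.eigenvectorUnitary : Matrix (Fin d) (Fin d) ℂ) *ᵥ x) j) := by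
  rw [dot_eq_diag hA x]
  simp only [dotProduct, Matrix.mulVec_diagonal, Complex.re_sum, ofReal_comp_eig]
  refine Finset.sum_congr rfl fun j _ => ?_
  rw [Pi.star_apply, show star (((star hA.eigenvectorUnitary : Matrix (Fin d) (Fin d) ℂ) *ᵥ x) j) *
      (((hA.eigenvalues j : ℝ) : ℂ) *
        ((star hA.eigenvectorUnitary : Matrix (Fin d) (Fin d) ℂ) *ᵥ x) j)
      = ((hA.eigenvalues j : ℝ) : ℂ) *
        (star (((star hA.eigenvectorUnitary : Matrix (Fin d) (Fin d) ℂ) *ᵥ x) j) *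
          ((star hA.eigenvectorUnitary : Matrix (Fin d) (Fin d) ℂ) *ᵥ x) j) from by ring,
    RCLike.star_def, ← Complex.normSq_eq_conj_mul_self, ← Complex.ofReal_mul, Complex.ofReal_re]

lemma norm_repr {A : Matrix (Fin d) (Fin d) ℂ} (hA : A.IsHermitian) (x : Fin d → ℂ) :
    (dotProduct (star x) x).re
      = ∑ j, Complex.normSq (((star hA.eigenvectorUnitary : Matrix (Fin d) (Fin d) ℂ) *ᵥ x) j) := by
  have hU2 : hA.eigenvectorUnitary.1 * (star hA.eigenvectorUnitary : Matrix (Fin d) (Fin d) ℂ)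
      = 1 := Unitary.coe_mul_star_self _
  have hyst : star ((star hA.eigenvectorUnitary : Matrix (Fin d) (Fin d) ℂ) *ᵥ x)
      = Matrix.vecMul (star x) hA.eigenvectorUnitary.1 := by
    rw [Matrix.star_mulVec, Matrix.star_eq_conjTranspose, Matrix.conjTranspose_conjTranspose]
  have h1 : dotProduct (star x) x
      = dotProduct
          (star ((star hA.eigenvectorUnitary : Matrix (Fin d) (Fin d) ℂ) *ᵥ x))
          ((star hA.eigenvectorUnitary : Matrix (Fin d) (Fin d) ℂ) *ᵥ x) := by
    calc dotProduct (star x) x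
        = dotProduct (star x) ((hA.eigenvectorUnitary.1 *
            (star hA.eigenvectorUnitary : Matrix (Fin d) (Fin d) ℂ)) *ᵥ x) := by
          rw [hU2, Matrix.one_mulVec]
      _ = _ := by
          rw [← Matrix.mulVec_mulVec, dotProduct_mulVec, hyst]
  rw [h1]
  simp only [dotProduct, Complex.re_sum, Pi.star_apply]
  refine Finset.sum_congr rfl fun j _ => ?_
  rw [RCLike.star_def, ← Complex.normSq_eq_conj_mul_self, Complex.ofReal_re]

lemma coef_zero {A : Matrix (Fin d) (Fin d) ℂ} (hA : A.IsHermitian) (S : Set (Fin d))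
    {x : EuclideanSpace ℂ (Fin d)}
    (hx : x ∈ Submodule.span ℂ (hA.eigenvectorBasis '' S)) :
    ∀ j ∉ S, @inner ℂ _ _ (hA.eigenvectorBasis j) x = 0 := by
  intro j hj
  induction hx using Submodule.span_induction with
  | mem y hy =>
      obtain ⟨s, hs, rfl⟩ := hy
      exact hA.eigenvectorBasis.orthonormal.2 (fun h : j = s => hj (h ▸ hs))
  | zero => simp
  | add a b _ _ h1 h2 => simp [inner_add_right, h1, h2]
  | smul c a _ h1 => simp [inner_smul_right, h1]

end eig

noncomputable def sortPerm {d : ℕ} (f : Fin d → ℝ) : Equiv.Perm (Fin d) :=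
  Fin.revPerm.trans (Tuple.sort f)

lemma antitone_sortPerm {d : ℕ} (f : Fin d → ℝ) : Antitone (f ∘ sortPerm f) := by
  intro i j hij
  exact Tuple.monotone_sort f (Fin.rev_le_rev.mpr hij)

lemma eig_mono {d : ℕ} {A B : Matrix (Fin d) (Fin d) ℂ} (hA : A.IsHermitian) (hB : B.IsHermitian)
    {c : ℝ} (hc : 0 ≤ c) (hle : ((c : ℂ) • B - A).PosSemidef) (m : Fin d) :
    hA.eigenvalues (sortPerm hA.eigenvalues m) ≤ c * hB.eigenvalues (sortPerm hB.eigenvalues m) := by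
  classical
  set σ := sortPerm hA.eigenvalues with hσdef
  set τ := sortPerm hB.eigenvalues with hτdef
  have hm1 : m.val + 1 ≤ d := m.isLt
  set g1 : Fin (m.val + 1) → Fin d := Fin.castLE hm1 with hg1
  set g2 : Fin (d - m.val) → Fin d := fun i => ⟨m.val + i.val, by omega⟩ with hg2
  set vA : Fin (m.val + 1) → EuclideanSpace ℂ (Fin d) := hA.eigenvectorBasis ∘ (σ ∘ g1) with hvA
  set wB : Fin (d - m.val) → EuclideanSpace ℂ (Fin d) := hB.eigenvectorBasis ∘ (τ ∘ g2) with hwB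
  have hinj1 : Function.Injective (σ ∘ g1) := σ.injective.comp (Fin.castLE_injective hm1)
  have hinj2 : Function.Injective (τ ∘ g2) := τ.injective.comp (fun i j h => by
    exact Fin.ext (by simpa [hg2] using congrArg Fin.val h))
  set VA := Submodule.span ℂ (Set.range vA) with hVAdef
  set VB := Submodule.span ℂ (Set.range wB) with hVBdef
  have hliA : LinearIndependent ℂ vA :=
    (hA.eigenvectorBasis.orthonormal.comp _ hinj1).linearIndependent
  have hliB : LinearIndependent ℂ wB :=
    (hB.eigenvectorBasis.orthonormal.comp _ hinj2).linearIndependent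
  have hrA : Module.finrank ℂ VA = m.val + 1 := by
    rw [hVAdef, finrank_span_eq_card hliA, Fintype.card_fin]
  have hrB : Module.finrank ℂ VB = d - m.val := by
    rw [hVBdef, finrank_span_eq_card hliB, Fintype.card_fin]
  have hfin : Module.finrank ℂ ↥(VA ⊔ VB) + Module.finrank ℂ ↥(VA ⊓ VB)
      = (m.val + 1) + (d - m.val) := by
    rw [Submodule.finrank_sup_add_finrank_inf_eq, hrA, hrB]
  have hled : Module.finrank ℂ ↥(VA ⊔ VB) ≤ d := by
    have h := Submodule.finrank_le (VA ⊔ VB)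
    rwa [finrank_euclideanSpace_fin] at h
  have hpos : 0 < Module.finrank ℂ ↥(VA ⊓ VB) := by
    have := m.isLt; omega
  have hnontriv : Nontrivial ↥(VA ⊓ VB) := Module.finrank_pos_iff.mp hpos
  obtain ⟨y, hy⟩ := exists_ne (0 : ↥(VA ⊓ VB))
  have hxVA : (y : EuclideanSpace ℂ (Fin d)) ∈ VA := y.2.1
  have hxVB : (y : EuclideanSpace ℂ (Fin d)) ∈ VB := y.2.2
  set x : EuclideanSpace ℂ (Fin d) := (y : EuclideanSpace ℂ (Fin d)) with hxdef
  have hxne : x ≠ 0 := fun h => hy (Subtype.ext h)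
  set xf : Fin d → ℂ := (x : Fin d → ℂ) with hxf
  have hn_eq : (dotProduct (star xf) xf).re = ∑ i, Complex.normSq (xf i) := by
    simp only [dotProduct, Complex.re_sum, Pi.star_apply]
    exact Finset.sum_congr rfl fun i _ => by
      rw [RCLike.star_def, ← Complex.normSq_eq_conj_mul_self, Complex.ofReal_re]
  have hn_pos : 0 < (dotProduct (star xf) xf).re := by
    rw [hn_eq]
    have hex : ∃ i, xf i ≠ 0 := by
      by_contra h
      push_neg at h
      exact hxne ((WithLp.ofLp_eq_zero 2).mp (funext h))
    obtain ⟨i, hi⟩ := hex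
    exact Finset.sum_pos' (fun i _ => Complex.normSq_nonneg _)
      ⟨i, Finset.mem_univ i, Complex.normSq_pos.mpr hi⟩
  have hSA : Set.range vA = hA.eigenvectorBasis '' Set.range (σ ∘ g1) := by
    rw [hvA, Set.range_comp]
  have hSB : Set.range wB = hB.eigenvectorBasis '' Set.range (τ ∘ g2) := by
    rw [hwB, Set.range_comp]
  have hcoefA : ∀ j ∉ Set.range (σ ∘ g1), @inner ℂ _ _ (hA.eigenvectorBasis j) x = 0 :=
    coef_zero hA _ (by rw [← hSA]; exact hxVA)
  have hcoefB : ∀ j ∉ Set.range (τ ∘ g2), @inner ℂ _ _ (hB.eigenvectorBasis j) x = 0 :=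
    coef_zero hB _ (by rw [← hSB]; exact hxVB)
  have lowA : hA.eigenvalues (σ m) * (dotProduct (star xf) xf).re
      ≤ (dotProduct (star xf) (A *ᵥ xf)).re := by
    rw [quad_repr hA xf, norm_repr hA xf, Finset.mul_sum]
    refine Finset.sum_le_sum fun j _ => ?_
    by_cases hj : j ∈ Set.range (σ ∘ g1)
    · obtain ⟨i, rfl⟩ := hj
      refine mul_le_mul_of_nonneg_right ?_ (Complex.normSq_nonneg _)
      have hgm : g1 i ≤ m := by
        simpa [hg1, Fin.le_def] using Nat.lt_succ_iff.mp i.isLt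
      exact antitone_sortPerm hA.eigenvalues hgm
    · rw [coeff_eq hA x j, hcoefA j hj]
      simp
  have upB : (dotProduct (star xf) (B *ᵥ xf)).re
      ≤ hB.eigenvalues (τ m) * (dotProduct (star xf) xf).re := by
    rw [quad_repr hB xf, norm_repr hB xf, Finset.mul_sum]
    refine Finset.sum_le_sum fun j _ => ?_
    by_cases hj : j ∈ Set.range (τ ∘ g2)
    · obtain ⟨i, rfl⟩ := hj
      refine mul_le_mul_of_nonneg_right ?_ (Complex.normSq_nonneg _)
      have hgm : m ≤ g2 i := by simp [hg2, Fin.le_def]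
      exact antitone_sortPerm hB.eigenvalues hgm
    · rw [coeff_eq hB x j, hcoefB j hj]
      simp
  have hpsd : (dotProduct (star xf) (A *ᵥ xf)).re
      ≤ c * (dotProduct (star xf) (B *ᵥ xf)).re := by
    have h0 := hle.dotProduct_mulVec_nonneg xf
    have h1 : ((c : ℂ) • B - A) *ᵥ xf = (c : ℂ) • (B *ᵥ xf) - A *ᵥ xf := by
      rw [Matrix.sub_mulVec, Matrix.smul_mulVec]
    rw [h1, dotProduct_sub, dotProduct_smul] at h0
    have h2 := (Complex.le_def.mp h0).1
    simp only [Complex.zero_re, Complex.sub_re, smul_eq_mul, Complex.re_ofReal_mul] at h2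
    linarith
  have hchain : hA.eigenvalues (σ m) * (dotProduct (star xf) xf).re
      ≤ (c * hB.eigenvalues (τ m)) * (dotProduct (star xf) xf).re := by
    have h3 := mul_le_mul_of_nonneg_left upB hc
    rw [mul_assoc]
    linarith
  exact le_of_mul_le_mul_right hchain hn_pos


/-- Pinching bound: if `σ = ∑ i, μ i • E i` is the spectral decomposition of `σ` into `k`
distinct eigenvalues, then `D_α(ρ‖σ) ≤ D_α(E_σ(ρ)‖σ) + (α/(α-1)) log k`, where
`E_σ(ρ) = ∑ i, E i * ρ * E i` is the pinching. -/
theorem renyiD_le_pinching {d k : ℕ} (ρ σ : Matrix (Fin d) (Fin d) ℂ)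
    (hρ : ρ.PosSemidef) (hσ : σ.PosSemidef) (hρ1 : ρ.trace = 1) (hσ1 : σ.trace = 1)
    (E : Fin k → Matrix (Fin d) (Fin d) ℂ) (μ : Fin k → ℝ)
    (hherm : ∀ i, (E i).IsHermitian) (hproj : ∀ i, E i * E i = E i)
    (horth : ∀ i j, i ≠ j → E i * E j = 0) (hsum : ∑ i, E i = 1)
    (hdecomp : σ = ∑ i, μ i • E i) (hdist : Function.Injective μ)
    (α : ℝ) (hα : 1 < α) :
    renyiD α ρ σ ≤ renyiD α (∑ i, E i * ρ * E i) σ + (α / (α - 1)) * Real.logb 2 k := by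
  classical
  have hd0 : d ≠ 0 := by
    rintro rfl
    rw [show ρ.trace = 0 from by simp [Matrix.trace]] at hρ1
    exact zero_ne_one hρ1
  have hk0 : k ≠ 0 := by
    rintro rfl
    have hd : 0 < d := Nat.pos_of_ne_zero hd0
    have := congrFun (congrFun hsum ⟨0, hd⟩) ⟨0, hd⟩
    simp [Matrix.one_apply] at this
  have hk1 : (1 : ℝ) ≤ k := Nat.one_le_cast.mpr (Nat.one_le_iff_ne_zero.mpr hk0)
  have hkpos : (0 : ℝ) < k := by linarith
  have hα0 : α ≠ 0 := by linarith
  set X := mpow σ ((1 - α) / (2 * α)) with hXdef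
  have hXh : X.IsHermitian := mpow_isHermitian hσ.1 _
  set P : Matrix (Fin d) (Fin d) ℂ := ∑ i, E i * ρ * E i with hPdef
  have hPpsd : P.PosSemidef := posSemidef_sum _ fun i => by
    have h := hρ.conjTranspose_mul_mul_same (E i)
    rwa [(hherm i).eq] at h
  have hMρ : (X * ρ * X).PosSemidef := by
    have h := hρ.conjTranspose_mul_mul_same X
    rwa [hXh.eq] at h
  have hMP : (X * P * X).PosSemidef := by
    have h := hPpsd.conjTranspose_mul_mul_same X
    rwa [hXh.eq] at h
  have hpinch := pinching_ineq ρ hρ E hherm hsum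
  have hconj : (((k : ℝ) : ℂ) • (X * P * X) - X * ρ * X).PosSemidef := by
    have h2 := hpinch.conjTranspose_mul_mul_same X
    rw [hXh.eq] at h2
    have h3 : X * ((k : ℂ) • P - ρ) * X = ((k : ℝ) : ℂ) • (X * P * X) - X * ρ * X := by
      rw [Matrix.mul_sub, Matrix.sub_mul, Complex.ofReal_natCast]
      rw [Matrix.mul_smul, Matrix.smul_mul]
    rwa [h3] at h2
  have hcomp := fun m => eig_mono hMρ.1 hMP.1 (c := (k : ℝ)) (Nat.cast_nonneg k) hconj m
  have htρ := trace_mpow hMρ hα0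
  have htP := trace_mpow hMP hα0
  set tρ := (mpow (X * ρ * X) α).trace.re with htρdef
  set tP := (mpow (X * P * X) α).trace.re with htPdef
  have hkpow : (0 : ℝ) < (k : ℝ) ^ α := Real.rpow_pos_of_pos hkpos α
  have hsum_le : tρ ≤ (k : ℝ) ^ α * tP := by
    rw [htρ, htP]
    rw [← Equiv.sum_comp (sortPerm hMρ.1.eigenvalues) (fun i => hMρ.1.eigenvalues i ^ α)]
    rw [← Equiv.sum_comp (sortPerm hMP.1.eigenvalues) (fun i => hMP.1.eigenvalues i ^ α)]
    rw [Finset.mul_sum]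
    refine Finset.sum_le_sum fun m _ => ?_
    have h1 := hcomp m
    have ha := hMρ.eigenvalues_nonneg (sortPerm hMρ.1.eigenvalues m)
    have hb := hMP.eigenvalues_nonneg (sortPerm hMP.1.eigenvalues m)
    calc (hMρ.1.eigenvalues (sortPerm hMρ.1.eigenvalues m)) ^ α
        ≤ ((k : ℝ) * hMP.1.eigenvalues (sortPerm hMP.1.eigenvalues m)) ^ α :=
          Real.rpow_le_rpow ha h1 (by linarith)
      _ = (k : ℝ) ^ α * (hMP.1.eigenvalues (sortPerm hMP.1.eigenvalues m)) ^ α :=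
          Real.mul_rpow (Nat.cast_nonneg k) hb
  have htρ_nonneg : 0 ≤ tρ := by
    rw [htρ]
    exact Finset.sum_nonneg fun i _ => Real.rpow_nonneg (hMρ.eigenvalues_nonneg i) α
  simp only [renyiD]
  rw [← htρdef, ← htPdef]
  by_cases h0 : tρ = 0
  · -- degenerate case
    have hcommσ : ∀ i, E i * σ = σ * E i := by
      intro i
      rw [hdecomp, Finset.mul_sum, Finset.sum_mul]
      refine Finset.sum_congr rfl fun j _ => ?_
      rw [Matrix.mul_smul, Matrix.smul_mul]
      by_cases hij : i = j
      · subst hij; rfl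
      · rw [horth i j hij, horth j i (Ne.symm hij)]
    have hcommE : ∀ i, E i * X = X * E i := fun i => commute_mpow hσ.1 (hcommσ i) _
    have hXρX : X * ρ * X = 0 := by
      apply eq_zero_of_eigenvalues_eq_zero hMρ.1
      intro i
      have hz := (Finset.sum_eq_zero_iff_of_nonneg
        (fun i _ => Real.rpow_nonneg (hMρ.eigenvalues_nonneg i) α)).mp
        (by rw [← htρ]; exact h0) i (Finset.mem_univ i)
      by_contra hne
      exact hne ((Real.rpow_eq_zero (hMρ.eigenvalues_nonneg i) hα0).mp hz)
    have hXρ : X * ρ = 0 := by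
      have hRh : hρ.sqrt.IsHermitian := hρ.posSemidef_sqrt.1
      have hNN : (X * hρ.sqrt) * (X * hρ.sqrt)ᴴ = 0 := by
        rw [Matrix.conjTranspose_mul, hRh.eq, hXh.eq]
        rw [show X * hρ.sqrt * (hρ.sqrt * X) = X * (hρ.sqrt * hρ.sqrt) * X from by noncomm_ring,
          hρ.sqrt_mul_self]
        exact hXρX
      have hN : X * hρ.sqrt = 0 := Matrix.self_mul_conjTranspose_eq_zero.mp hNN
      rw [← hρ.sqrt_mul_self, ← mul_assoc, hN, zero_mul]
    have hXPX : X * P * X = 0 := by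
      rw [hPdef, Finset.mul_sum, Finset.sum_mul]
      refine Finset.sum_eq_zero fun i _ => ?_
      rw [show X * (E i * ρ * E i) * X = X * E i * ρ * (E i * X) from by noncomm_ring,
        show X * E i = E i * X from (hcommE i).symm, mul_assoc (E i) X ρ, hXρ, mul_zero, zero_mul]
    have htP0 : tP = 0 := by
      rw [htPdef, hXPX, trace_mpow Matrix.PosSemidef.zero hα0]
      refine Finset.sum_eq_zero fun i _ => ?_
      have : (Matrix.PosSemidef.zero (n := Fin d) (R := ℂ)).1.eigenvalues i = 0 := by
        rw [Matrix.IsHermitian.eigenvalues_eq]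
        simp
      rw [this, Real.zero_rpow hα0]
    rw [h0, htP0, Real.logb_zero, mul_zero, zero_add]
    have hlogk : 0 ≤ Real.logb 2 k := Real.logb_nonneg (by norm_num) hk1
    have hfr : 0 < α / (α - 1) := by
      apply div_pos <;> linarith
    exact mul_nonneg (le_of_lt hfr) hlogk
  · -- main case
    have htρ_pos : 0 < tρ := lt_of_le_of_ne htρ_nonneg (Ne.symm h0)
    have htP_pos : 0 < tP := by nlinarith
    have hlog : Real.logb 2 tρ ≤ Real.logb 2 ((k : ℝ) ^ α * tP) :=
      Real.logb_le_logb_of_le (by norm_num) htρ_pos hsum_le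
    have hsplit : Real.logb 2 ((k : ℝ) ^ α * tP) = α * Real.logb 2 k + Real.logb 2 tP := by
      rw [Real.logb_mul (ne_of_gt hkpow) (ne_of_gt htP_pos)]
      congr 1
      rw [Real.logb, Real.logb, Real.log_rpow hkpos]
      ring
    have hfrac : (0 : ℝ) < 1 / (α - 1) := by
      apply div_pos one_pos; linarith
    have hmul := mul_le_mul_of_nonneg_left (hsplit ▸ hlog) (le_of_lt hfrac)
    calc (1 / (α - 1)) * Real.logb 2 tρ
        ≤ (1 / (α - 1)) * (α * Real.logb 2 k + Real.logb 2 tP) := hmul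
      _ = (1 / (α - 1)) * Real.logb 2 tP + (α / (α - 1)) * Real.logb 2 k := by ring
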